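/- Let f : ℝ → ℝ be continuous and bounded and let T > 0. If for the Haar wavelet Wf(u, 2T) = 0 for all u ∈ ℝ, then the function G(u) := ∫_u^{u+T} f(t) dt is constant on ℝ. -/
import Mathlib


open MeasureTheory

/-- The Haar wavelet. -/
noncomputable def haar (t : ℝ) : ℝ :=
  if 0 ≤ t ∧ t < 1 / 2 then 1 else if 1 / 2 ≤ t ∧ t < 1 then -1 else 0

/-- if f is continuous and bounded and its Haar CWT at scale 2T
vanishes for all u, then G(u) := ∫_u^{u+T} f is constant. -/
theorem haar_cwt_vanishes_implies_window_constant
    (f : ℝ → ℝ) (hf : Continuous f) (M : ℝ) (hbd : ∀ t : ℝ, |f t| ≤ M)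
    (T : ℝ) (hT : 0 < T)
    (hW : ∀ u : ℝ,
      (∫ t : ℝ, f t * haar ((t - u) / (2 * T)) / Real.sqrt (2 * T)) = 0) :
    ∀ u v : ℝ, (∫ t in u..(u + T), f t) = ∫ t in v..(v + T), f t := by
  have h2T : (0 : ℝ) < 2 * T := by linarith
  have hs0 : 0 < Real.sqrt (2 * T) := Real.sqrt_pos.mpr h2T
  have hint : ∀ a b : ℝ, IntervalIntegrable f volume a b :=
    fun a b => hf.intervalIntegrable a b
  set G : ℝ → ℝ := fun u => ∫ t in u..(u + T), f t with hG
  -- Step 1: periodicity of G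
  have hper : ∀ u : ℝ, (∫ t in u..(u + T), f t) = ∫ t in (u + T)..(u + T + T), f t := by
    intro u
    have key : ∀ t : ℝ, f t * haar ((t - u) / (2 * T)) / Real.sqrt (2 * T) =
        ((Set.Ico u (u + T)).indicator f t - (Set.Ico (u + T) (u + T + T)).indicator f t) /
          Real.sqrt (2 * T) := by
      intro t
      have e1 : (0 : ℝ) ≤ (t - u) / (2 * T) ↔ u ≤ t := by
        rw [le_div_iff₀ h2T]; constructor <;> intro h <;> linarith
      have e2 : (t - u) / (2 * T) < 1 / 2 ↔ t < u + T := by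
        rw [div_lt_iff₀ h2T]; constructor <;> intro h <;> linarith
      have e3 : (1 : ℝ) / 2 ≤ (t - u) / (2 * T) ↔ u + T ≤ t := by
        rw [le_div_iff₀ h2T]; constructor <;> intro h <;> linarith
      have e4 : (t - u) / (2 * T) < 1 ↔ t < u + T + T := by
        rw [div_lt_iff₀ h2T]; constructor <;> intro h <;> linarith
      simp only [haar, e1, e2, e3, e4, Set.indicator, Set.mem_Ico]
      split_ifs with h1 h2 h3
      all_goals try ring
      all_goals exfalso
      · linarith [h1.1, h1.2, h2.1]
    have hIOn : ∀ a b : ℝ, IntegrableOn f (Set.Ico a b) volume :=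
      fun a b => (hf.continuousOn.integrableOn_Icc).mono_set Set.Ico_subset_Icc_self
    have hInd1 : Integrable ((Set.Ico u (u + T)).indicator f) volume :=
      (hIOn u (u + T)).integrable_indicator measurableSet_Ico
    have hInd2 : Integrable ((Set.Ico (u + T) (u + T + T)).indicator f) volume :=
      (hIOn (u + T) (u + T + T)).integrable_indicator measurableSet_Ico
    have hWu := hW u
    simp only [key] at hWu
    rw [integral_div, div_eq_zero_iff] at hWu
    have h0 : (∫ t : ℝ, ((Set.Ico u (u + T)).indicator f t
        - (Set.Ico (u + T) (u + T + T)).indicator f t)) = 0 :=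
      hWu.resolve_right hs0.ne'
    rw [integral_sub hInd1 hInd2, sub_eq_zero, integral_indicator measurableSet_Ico,
      integral_indicator measurableSet_Ico] at h0
    rw [intervalIntegral.integral_of_le (by linarith : u ≤ u + T),
      intervalIntegral.integral_of_le (by linarith : u + T ≤ u + T + T),
      ← setIntegral_congr_set Ico_ae_eq_Ioc, ← setIntegral_congr_set Ico_ae_eq_Ioc]
    exact h0
  have hGper : ∀ u : ℝ, G (u + T) = G u := fun u => (hper u).symm
  -- Step 2: G (u + m*T) = G u
  have hGn : ∀ u : ℝ, ∀ m : ℕ, G (u + m * T) = G u := by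
    intro u m
    induction m with
    | zero => simp
    | succ m ihm =>
      have h : (u + ((m + 1 : ℕ) : ℝ) * T) = (u + (m : ℝ) * T) + T := by push_cast; ring
      rw [h, hGper, ihm]
  -- Step 3: telescoping
  have htel : ∀ u : ℝ, ∀ n : ℕ, (∫ t in u..(u + (n : ℝ) * T), f t) = (n : ℝ) * G u := by
    intro u n
    induction n with
    | zero => simp
    | succ n ih =>
      rw [show (u + ((n + 1 : ℕ) : ℝ) * T) = u + (n : ℝ) * T + T by push_cast; ring,
        ← intervalIntegral.integral_add_adjacent_intervals (hint u (u + (n : ℝ) * T))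
          (hint (u + (n : ℝ) * T) (u + (n : ℝ) * T + T)), ih,
        show (∫ t in (u + (n : ℝ) * T)..(u + (n : ℝ) * T + T), f t) = G (u + (n : ℝ) * T)
          from rfl, hGn]
      push_cast; ring
  -- Step 4: bound on interval integrals
  have hMb : ∀ a b : ℝ, |∫ t in a..b, f t| ≤ M * |b - a| := by
    intro a b
    have := intervalIntegral.norm_integral_le_of_norm_le_const
      (f := f) (a := a) (b := b) (C := M) (fun x _ => by
        simpa [Real.norm_eq_abs] using hbd x)
    simpa [Real.norm_eq_abs] using this
  -- Step 5: key identity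
  have hdiff : ∀ w : ℝ, ∀ n : ℕ, (n : ℝ) * (G w - G 0) =
      (∫ t in ((n : ℝ) * T)..(w + (n : ℝ) * T), f t) - ∫ t in (0 : ℝ)..w, f t := by
    intro w n
    have h1 := htel w n
    have h2 := htel 0 n
    rw [zero_add] at h2
    have ha : (∫ t in w..(w + (n : ℝ) * T), f t) =
        (∫ t in w..((n : ℝ) * T), f t) + ∫ t in ((n : ℝ) * T)..(w + (n : ℝ) * T), f t :=
      (intervalIntegral.integral_add_adjacent_intervals (hint _ _) (hint _ _)).symm
    have hb : (∫ t in (0 : ℝ)..((n : ℝ) * T), f t) =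
        (∫ t in (0 : ℝ)..w, f t) + ∫ t in w..((n : ℝ) * T), f t :=
      (intervalIntegral.integral_add_adjacent_intervals (hint _ _) (hint _ _)).symm
    rw [ha] at h1; rw [hb] at h2
    rw [mul_sub]
    linarith
  have habs : ∀ x y : ℝ, |x - y| ≤ |x| + |y| := by
    intro x y
    calc |x - y| = |x + (-y)| := by rw [sub_eq_add_neg]
      _ ≤ |x| + |(-y)| := abs_add_le _ _
      _ = |x| + |y| := by rw [abs_neg]
  -- Step 6: G is constant
  have hzero : ∀ w : ℝ, G w = G 0 := by
    intro w
    by_contra hne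
    have hpos : 0 < |G w - G 0| := abs_pos.mpr (sub_ne_zero.mpr hne)
    obtain ⟨n, hn⟩ := exists_nat_gt ((2 * M * |w|) / |G w - G 0|)
    have hb : (n : ℝ) * |G w - G 0| ≤ 2 * M * |w| := by
      calc (n : ℝ) * |G w - G 0| = |(n : ℝ) * (G w - G 0)| := by
            rw [abs_mul, Nat.abs_cast]
        _ = |(∫ t in ((n : ℝ) * T)..(w + (n : ℝ) * T), f t) - ∫ t in (0 : ℝ)..w, f t| := by
            rw [hdiff]
        _ ≤ |∫ t in ((n : ℝ) * T)..(w + (n : ℝ) * T), f t| + |∫ t in (0 : ℝ)..w, f t| :=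
            habs _ _
        _ ≤ M * |w + (n : ℝ) * T - (n : ℝ) * T| + M * |w - 0| :=
            add_le_add (hMb _ _) (hMb _ _)
        _ = 2 * M * |w| := by
            rw [show w + (n : ℝ) * T - (n : ℝ) * T = w by ring, sub_zero]; ring
    have := (div_lt_iff₀ hpos).mp hn
    linarith
  intro u v
  show G u = G v
  rw [hzero u, hzero v]
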